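/- Define g(x,y) = (cosh(x) − cos(y))/(x² + y²) for (x,y) ≠ (0,0). For every fixed real y, the function x ↦ g(x,y) is monotonically decreasing on (−∞, 0) and monotonically increasing on (0, ∞). -/

import Mathlib

open Real Set

lemma lemA : ∀ x : ℝ, 0 ≤ x → Real.sinh x ≤ x * Real.cosh x := by
  have hm : MonotoneOn (fun x : ℝ => x * Real.cosh x - Real.sinh x) (Ici 0) := by
    apply monotoneOn_of_deriv_nonneg (convex_Ici 0)
    · exact (continuous_id.mul Real.continuous_cosh).sub Real.continuous_sinh |>.continuousOn
    · fun_prop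
    · intro x hx
      rw [interior_Ici] at hx
      have : deriv (fun x : ℝ => x * Real.cosh x - Real.sinh x) x = x * Real.sinh x := by
        have h1 : HasDerivAt (fun x : ℝ => x * Real.cosh x - Real.sinh x)
            (1 * Real.cosh x + x * Real.sinh x - Real.cosh x) x :=
          ((hasDerivAt_id x).mul (Real.hasDerivAt_cosh x)).sub (Real.hasDerivAt_sinh x)
        rw [h1.deriv]; ring
      rw [this]
      exact mul_nonneg hx.le (Real.sinh_nonneg_iff.2 hx.le)
  intro x hx
  have := hm (self_mem_Ici) hx hx
  simp at this
  linarith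

lemma lemB : ∀ x : ℝ, 0 ≤ x → 2 * (Real.cosh x - 1) ≤ x * Real.sinh x := by
  have hm : MonotoneOn (fun x : ℝ => x * Real.sinh x - 2 * (Real.cosh x - 1)) (Ici 0) := by
    apply monotoneOn_of_deriv_nonneg (convex_Ici 0)
    · fun_prop
    · fun_prop
    · intro x hx
      rw [interior_Ici] at hx
      have : deriv (fun x : ℝ => x * Real.sinh x - 2 * (Real.cosh x - 1)) x
          = x * Real.cosh x - Real.sinh x := by
        have h1 : HasDerivAt (fun x : ℝ => x * Real.sinh x - 2 * (Real.cosh x - 1))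
            (1 * Real.sinh x + x * Real.cosh x - 2 * (Real.sinh x - 0)) x :=
          ((hasDerivAt_id x).mul (Real.hasDerivAt_sinh x)).sub
            (((Real.hasDerivAt_cosh x).sub (hasDerivAt_const x 1)).const_mul 2)
        rw [h1.deriv]; ring
      rw [this]
      linarith [lemA x hx.le]
  intro x hx
  have := hm (self_mem_Ici) hx hx
  simp at this
  linarith

lemma lemC : MonotoneOn (fun x : ℝ => (Real.cosh x - 1) / x ^ 2) (Ioi 0) := by
  apply monotoneOn_of_deriv_nonneg (convex_Ioi 0)
  · apply ContinuousOn.div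
    · fun_prop
    · fun_prop
    · intro x hx
      rw [mem_Ioi] at hx; positivity
  · apply DifferentiableOn.div
    · fun_prop
    · fun_prop
    · intro x hx
      rw [interior_Ioi, mem_Ioi] at hx; positivity
  · intro x hx
    rw [interior_Ioi, mem_Ioi] at hx
    have hx2 : (x:ℝ) ^ 2 ≠ 0 := by positivity
    have h1 : HasDerivAt (fun x : ℝ => (Real.cosh x - 1) / x ^ 2)
        (((Real.sinh x - 0) * x ^ 2 - (Real.cosh x - 1) * (2 * x)) / (x ^ 2) ^ 2) x := by
      exact (((Real.hasDerivAt_cosh x).sub (hasDerivAt_const x 1)).div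
        (hasDerivAt_pow 2 x |>.congr_deriv (by ring)) hx2)
    rw [h1.deriv]
    have hnum : 0 ≤ (Real.sinh x - 0) * x ^ 2 - (Real.cosh x - 1) * (2 * x) := by
      have := lemB x hx.le
      nlinarith [mul_nonneg hx.le (sub_nonneg.2 this)]
    positivity

lemma lemD : MonotoneOn (fun x : ℝ => Real.cosh x - x ^ 2 / 2) (Ici 0) := by
  apply monotoneOn_of_deriv_nonneg (convex_Ici 0)
  · fun_prop
  · fun_prop
  · intro x hx
    rw [interior_Ici] at hx
    have h1 : HasDerivAt (fun x : ℝ => Real.cosh x - x ^ 2 / 2) (Real.sinh x - x) x := by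
      have : HasDerivAt (fun x : ℝ => Real.cosh x - x ^ 2 / 2) _ x := (Real.hasDerivAt_cosh x).sub (((hasDerivAt_pow 2 x)).div_const 2)
      convert this using 1
      push_cast; ring
    rw [h1.deriv]
    have := Real.self_le_sinh_iff.2 hx.le
    linarith

lemma key (y a b : ℝ) (ha : 0 < a) (hab : a ≤ b) :
    (Real.cosh a - Real.cos y) / (a ^ 2 + y ^ 2) ≤
    (Real.cosh b - Real.cos y) / (b ^ 2 + y ^ 2) := by
  have hb : 0 < b := lt_of_lt_of_le ha hab
  have hcosy : 1 - y ^ 2 / 2 ≤ Real.cos y := Real.one_sub_sq_div_two_le_cos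
  have h1 : (Real.cosh a - 1) / a ^ 2 ≤ (Real.cosh b - 1) / b ^ 2 := lemC (mem_Ioi.2 ha) (mem_Ioi.2 hb) hab
  have h1' : (Real.cosh a - 1) * b ^ 2 ≤ (Real.cosh b - 1) * a ^ 2 := by
    rw [div_le_div_iff₀ (by positivity) (by positivity)] at h1
    nlinarith
  have h2 : Real.cosh a - a ^ 2 / 2 ≤ Real.cosh b - b ^ 2 / 2 := lemD (mem_Ici.2 ha.le) (mem_Ici.2 hb.le) hab
  rw [div_le_div_iff₀ (by positivity) (by positivity)]
  nlinarith [sq_nonneg y, mul_nonneg (sq_nonneg y) (sub_nonneg.2 h2),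
    mul_nonneg (sub_nonneg.2 hcosy) (sub_nonneg.2 (pow_le_pow_left₀ ha.le hab 2))]

theorem g_monotone (y : ℝ) :
    AntitoneOn (fun x : ℝ => (Real.cosh x - Real.cos y) / (x ^ 2 + y ^ 2)) (Iio 0) ∧
    MonotoneOn (fun x : ℝ => (Real.cosh x - Real.cos y) / (x ^ 2 + y ^ 2)) (Ioi 0) := by
  constructor
  · intro a ha b hb hab
    simp only [mem_Iio] at ha hb
    have := key y (-b) (-a) (by linarith) (by linarith)
    simpa [Real.cosh_neg, neg_sq] using this
  · intro a ha b hb hab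
    exact key y a b ha hab
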